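/- Let $\varepsilon \in (0,1)$ be such that $N = \varepsilon^{-1/2}$ is a positive integer. Define $f(x) = k\varepsilon^{1/2} - x$ for $|x - k\varepsilon^{1/2}| < \tfrac12\varepsilon^{1/2}$ ($k \in \mathbb{Z}$); $g(y) = k\varepsilon^{1/2} + k\varepsilon$ for $|y - k\varepsilon^{1/2}| < \tfrac12\varepsilon^{1/2}$; and $h(t) = n\varepsilon^{1/2} + n\varepsilon$ where $n \in \{0,\dots,N-1\}$, $k \in \mathbb{Z}$ are the unique integers with $|t - (k\varepsilon^{1/2} + n\varepsilon)| < \tfrac12\varepsilon$. Then the sublevel set $\mathcal{E} = \{(x,y) \in [0,1]^2 : |g(y) - h(x+y)| < \varepsilon \text{ and } |y - f(x) - h(x+y)| < \varepsilon\}$ satisfies $|\mathcal{E}| \ge c\,\varepsilon^{1/2}$ for an absolute constant $c > 0$. -/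

import Mathlib

open MeasureTheory

noncomputable def fCon (ε x : ℝ) : ℝ := (round (x / Real.sqrt ε) : ℤ) * Real.sqrt ε - x

noncomputable def gCon (ε y : ℝ) : ℝ :=
  ((round (y / Real.sqrt ε) : ℤ) : ℝ) * Real.sqrt ε +
    ((round (y / Real.sqrt ε) : ℤ) : ℝ) * ε

noncomputable def hCon (ε : ℝ) (N : ℕ) (t : ℝ) : ℝ :=
  ((round (t / ε) % (N : ℤ) : ℤ) : ℝ) * Real.sqrt ε +
    ((round (t / ε) % (N : ℤ) : ℤ) : ℝ) * ε

lemma myRound (x : ℝ) (n : ℤ) (h : |x - n| < 1/2) : round x = n := by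
  rw [round_eq]
  rw [abs_lt] at h
  exact Int.floor_eq_iff.mpr ⟨by push_cast; linarith, by push_cast; linarith⟩

lemma stripVol (a b c d : ℝ) :
    volume {p : ℝ × ℝ | p.2 ∈ Set.Ioo a b ∧ p.1 + p.2 ∈ Set.Ioo c d}
      = ENNReal.ofReal (b - a) * ENNReal.ofReal (d - c) := by
  have hmp : MeasurePreserving (fun z : ℝ × ℝ => (z.2, z.2 + z.1)) volume volume := by
    rw [Measure.volume_eq_prod]
    exact measurePreserving_prod_add_swap volume volume
  have hset : {p : ℝ × ℝ | p.2 ∈ Set.Ioo a b ∧ p.1 + p.2 ∈ Set.Ioo c d}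
      = (fun z : ℝ × ℝ => (z.2, z.2 + z.1)) ⁻¹' (Set.Ioo a b ×ˢ Set.Ioo c d) := by
    ext p
    simp [Set.mem_prod, add_comm, and_comm]
  rw [hset, hmp.measure_preimage (measurableSet_Ioo.prod measurableSet_Ioo).nullMeasurableSet,
    Measure.volume_eq_prod, Measure.prod_prod, Real.volume_Ioo, Real.volume_Ioo]

/-- The basic cell used in the lower-bound construction. -/
def pieceSet (s ε : ℝ) (q : ℕ × ℕ) : Set (ℝ × ℝ) :=
  {p : ℝ × ℝ | p.2 ∈ Set.Ioo ((q.1:ℝ)*s + q.1*ε + ε/2 - s/2) ((q.1:ℝ)*s + s/2) ∧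
    p.1 + p.2 ∈ Set.Ioo (((q.1:ℝ)+q.2)*s + q.1*ε - ε/2) (((q.1:ℝ)+q.2)*s + q.1*ε + ε/2)}

set_option maxHeartbeats 1600000 in
theorem stmt14 :
    ∃ c : ℝ, 0 < c ∧ ∀ (ε : ℝ) (N : ℕ), 0 < ε → ε < 1 → 0 < N →
      (N : ℝ) = (Real.sqrt ε)⁻¹ →
      ENNReal.ofReal (c * Real.sqrt ε) ≤
        volume {p : ℝ × ℝ | p ∈ Set.Icc (0:ℝ) 1 ×ˢ Set.Icc (0:ℝ) 1 ∧
          |gCon ε p.2 - hCon ε N (p.1 + p.2)| < ε ∧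
          |p.2 - fCon ε p.1 - hCon ε N (p.1 + p.2)| < ε} := by
  refine ⟨1/32, by norm_num, fun ε N hε hε1 hN0 hNe => ?_⟩
  set s := Real.sqrt ε with hs_def
  have hs : 0 < s := Real.sqrt_pos.mpr hε
  have hss : s * s = ε := Real.mul_self_sqrt hε.le
  have hNs : (N : ℝ) * s = 1 := by rw [hNe]; field_simp
  have hs1 : s < 1 := by nlinarith
  have hN2 : 2 ≤ N := by
    by_contra h
    have : N = 1 := by omega
    rw [this] at hNs
    simp at hNs
    nlinarith
  have hN2R : (2:ℝ) ≤ N := by exact_mod_cast hN2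
  have hs2 : s ≤ 1/2 := by nlinarith
  have hεs : ε < s := by nlinarith
  have hNε : (N:ℝ) * ε = s := by linear_combination (-(N:ℝ))*hss + s*hNs
  have hN2ε : (N:ℝ) * N * ε = 1 := by
    linear_combination (-(N:ℝ)*N) * hss + ((N:ℝ)*s + 1) * hNs
  set F : Finset (ℕ × ℕ) := Finset.Icc 1 (N/2) ×ˢ Finset.Icc 1 (N-1) with hF
  -- bounds for members of F
  have hFmem : ∀ q ∈ F, 1 ≤ q.1 ∧ 2 * q.1 ≤ N ∧ 1 ≤ q.2 ∧ q.2 + 1 ≤ N := by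
    rintro ⟨n, j⟩ hq
    rw [hF, Finset.mem_product, Finset.mem_Icc, Finset.mem_Icc] at hq
    omega
  -- each piece lies in the target set
  have hsub : ∀ q ∈ F, pieceSet s ε q ⊆
      {p : ℝ × ℝ | p ∈ Set.Icc (0:ℝ) 1 ×ˢ Set.Icc (0:ℝ) 1 ∧
        |gCon ε p.2 - hCon ε N (p.1 + p.2)| < ε ∧
        |p.2 - fCon ε p.1 - hCon ε N (p.1 + p.2)| < ε} := by
    rintro ⟨n, j⟩ hq ⟨x, y⟩ hp
    obtain ⟨hn1, hn2, hj1, hj2⟩ := hFmem _ hq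
    have hn1R : (1:ℝ) ≤ n := by exact_mod_cast hn1
    have hn2R : 2 * (n:ℝ) ≤ N := by exact_mod_cast hn2
    have hj1R : (1:ℝ) ≤ j := by exact_mod_cast hj1
    have hj2R : (j:ℝ) + 1 ≤ N := by exact_mod_cast hj2
    simp only [pieceSet, Set.mem_setOf_eq, Set.mem_Ioo] at hp
    obtain ⟨⟨hy1, hy2⟩, hu1, hu2⟩ := hp
    have hnε : ε ≤ (n:ℝ)*ε := le_mul_of_one_le_left hε.le hn1R
    have hnε' : 2*((n:ℝ)*ε) ≤ s := by
      have := mul_le_mul_of_nonneg_right hn2R hε.le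
      linarith [hNε]
    have hns : 2*((n:ℝ)*s) ≤ 1 := by
      have := mul_le_mul_of_nonneg_right hn2R hs.le
      linarith [hNs]
    have hns1 : s ≤ (n:ℝ)*s := le_mul_of_one_le_left hs.le hn1R
    have hjs1 : s ≤ (j:ℝ)*s := le_mul_of_one_le_left hs.le hj1R
    have hjs : (j:ℝ)*s + s ≤ 1 := by
      have := mul_le_mul_of_nonneg_right hj2R hs.le
      linarith [hNs]
    -- x bounds
    have hx1 : (j:ℝ)*s - s/2 < x := by linarith
    have hx2 : x < (j:ℝ)*s + s/2 := by linarith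
    -- round computations
    have hry : round (y / s) = (n : ℤ) := by
      apply myRound
      have h1 : y / s - ((n:ℤ):ℝ) = (y - n*s)/s := by push_cast; field_simp
      rw [h1, abs_div, abs_of_pos hs, div_lt_iff₀ hs, abs_lt]
      constructor <;> linarith
    have hrx : round (x / s) = (j : ℤ) := by
      apply myRound
      have h1 : x / s - ((j:ℤ):ℝ) = (x - j*s)/s := by push_cast; field_simp
      rw [h1, abs_div, abs_of_pos hs, div_lt_iff₀ hs, abs_lt]
      constructor <;> linarith
    have hcenter : ((((n:ℤ)+j)*N + n : ℤ) : ℝ) * ε = ((n:ℝ)+j)*s + n*ε := by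
      push_cast
      rw [← hNε]
      ring
    have hru : round ((x + y) / ε) = ((n:ℤ)+j)*N + n := by
      apply myRound
      have h1 : (x+y) / ε - ((((n:ℤ)+j)*N + n : ℤ):ℝ) = ((x+y) - ((((n:ℤ)+j)*N + n : ℤ):ℝ)*ε)/ε := by
        field_simp
      rw [h1, hcenter, abs_div, abs_of_pos hε, div_lt_iff₀ hε, abs_lt]
      constructor <;> linarith
    have hmod : ((((n:ℤ)+j)*N + n) % (N:ℤ)) = (n:ℤ) := by
      rw [add_comm, Int.add_mul_emod_self_right]
      exact Int.emod_eq_of_lt (by positivity) (by exact_mod_cast (show n < N by omega))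
    refine ⟨⟨⟨?_, ?_⟩, ?_, ?_⟩, ?_, ?_⟩
    · linarith
    · linarith
    · linarith
    · linarith
    · show |gCon ε y - hCon ε N (x + y)| < ε
      rw [gCon, hCon, ← hs_def, hry, hru, hmod]
      simp only [sub_self, abs_zero]
      exact hε
    · show |y - fCon ε x - hCon ε N (x + y)| < ε
      rw [fCon, hCon, ← hs_def, hrx, hru, hmod]
      have h1 : y - (((j:ℤ):ℝ) * s - x) - (((n:ℤ):ℝ) * s + ((n:ℤ):ℝ) * ε)
          = (x + y) - (((n:ℝ)+j)*s + n*ε) := by push_cast; ring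
      rw [h1, abs_lt]
      constructor <;> linarith
    -- disjointness of the pieces
  have hdisj : (↑F : Set (ℕ × ℕ)).Pairwise (Function.onFun Disjoint (pieceSet s ε)) := by
    rintro ⟨n, j⟩ hq ⟨n', j'⟩ hq' hne
    rw [Function.onFun, Set.disjoint_left]
    rintro ⟨x, y⟩ hp hp'
    simp only [pieceSet, Set.mem_setOf_eq, Set.mem_Ioo] at hp hp'
    obtain ⟨⟨hy1, hy2⟩, hu1, hu2⟩ := hp
    obtain ⟨⟨hy1', hy2'⟩, hu1', hu2'⟩ := hp'
    rcases Nat.lt_trichotomy n n' with h | h | h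
    · have h1 : (n:ℝ) + 1 ≤ n' := by exact_mod_cast h
      have h2 : ((n:ℝ)+1)*s ≤ (n':ℝ)*s := mul_le_mul_of_nonneg_right h1 hs.le
      have h3 : (0:ℝ) ≤ (n':ℝ)*ε := by positivity
      linarith
    · subst h
      have hjj : j ≠ j' := by simpa using hne
      rcases Nat.lt_trichotomy j j' with h | h | h
      · have h1 : (j:ℝ) + 1 ≤ j' := by exact_mod_cast h
        have h2 : ((j:ℝ)+1)*s ≤ (j':ℝ)*s := mul_le_mul_of_nonneg_right h1 hs.le
        linarith
      · exact hjj h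
      · have h1 : (j':ℝ) + 1 ≤ j := by exact_mod_cast h
        have h2 : ((j':ℝ)+1)*s ≤ (j:ℝ)*s := mul_le_mul_of_nonneg_right h1 hs.le
        linarith
    · have h1 : (n':ℝ) + 1 ≤ n := by exact_mod_cast h
      have h2 : ((n':ℝ)+1)*s ≤ (n:ℝ)*s := mul_le_mul_of_nonneg_right h1 hs.le
      have h3 : (0:ℝ) ≤ (n:ℝ)*ε := by positivity
      linarith
  -- measurability
  have hmeas : ∀ q ∈ F, MeasurableSet (pieceSet s ε q) := by
    intro q _
    exact (measurable_snd measurableSet_Ioo).inter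
      ((measurable_fst.add measurable_snd) measurableSet_Ioo)
  -- volume of each piece
  have hε2 : ε ≤ s/2 := by nlinarith
  have hvol : ∀ q ∈ F, ENNReal.ofReal (s/4 * ε) ≤ volume (pieceSet s ε q) := by
    rintro ⟨n, j⟩ hq
    obtain ⟨hn1, hn2, -, -⟩ := hFmem _ hq
    have hn2R : 2 * (n:ℝ) ≤ N := by exact_mod_cast hn2
    have hnε' : 2*((n:ℝ)*ε) ≤ s := by
      have := mul_le_mul_of_nonneg_right hn2R hε.le
      linarith [hNε]
    simp only [pieceSet, Prod.fst, Prod.snd]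
    rw [stripVol,
      show (((n:ℝ)+j)*s + n*ε + ε/2) - (((n:ℝ)+j)*s + n*ε - ε/2) = ε from by ring,
      show ((n:ℝ)*s + s/2) - ((n:ℝ)*s + (n:ℝ)*ε + ε/2 - s/2) = s - (n:ℝ)*ε - ε/2 from by ring,
      ENNReal.ofReal_mul (by positivity)]
    exact mul_le_mul_left (ENNReal.ofReal_le_ofReal (by linarith)) _
  -- cardinality bound
  have hcard : F.card = (N/2) * (N-1) := by
    rw [hF, Finset.card_product, Nat.card_Icc, Nat.card_Icc]
    simp
  have h8 : (N:ℝ) * N ≤ 8 * (F.card:ℝ) := by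
    have c1 : N ≤ 4 * (N/2) := by omega
    have c2 : N ≤ 2 * (N-1) := by omega
    have : N * N ≤ 8 * F.card := by
      calc N * N ≤ (4 * (N/2)) * (2 * (N-1)) := Nat.mul_le_mul c1 c2
        _ = 8 * ((N/2) * (N-1)) := by ring
        _ = 8 * F.card := by rw [hcard]
    exact_mod_cast this
  -- putting it together
  calc ENNReal.ofReal (1/32 * s)
      ≤ (F.card : ENNReal) * ENNReal.ofReal (s/4 * ε) := by
        have e1 : ((F.card : ℕ) : ENNReal) * ENNReal.ofReal (s/4 * ε)
            = ENNReal.ofReal ((F.card : ℝ) * (s/4 * ε)) := by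
          rw [ENNReal.ofReal_mul (show (0:ℝ) ≤ (F.card:ℝ) from Nat.cast_nonneg _),
            ENNReal.ofReal_natCast]
        rw [e1]
        apply ENNReal.ofReal_le_ofReal
        have key : (N:ℝ)*N*(s*ε/32) = s/32 := by linear_combination (s/32) * hN2ε
        have := mul_le_mul_of_nonneg_right h8 (show (0:ℝ) ≤ s*ε/32 by positivity)
        linarith
    _ = ∑ q ∈ F, ENNReal.ofReal (s/4 * ε) := by
        rw [Finset.sum_const, nsmul_eq_mul]
    _ ≤ ∑ q ∈ F, volume (pieceSet s ε q) := Finset.sum_le_sum hvol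
    _ = volume (⋃ q ∈ F, pieceSet s ε q) := (measure_biUnion_finset hdisj hmeas).symm
    _ ≤ _ := measure_mono (Set.iUnion₂_subset hsub)
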